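/- Let H_n = ∑_{j=1}^{n} 1/j and let h(n) be the number of indices i ∈ {1, …, n} with 1/i > H_n/n. Then the head fraction h(n)/n tends to 0 as n → ∞. -/
import Mathlib

open Finset Filter

lemma zipf_H_eq (n : ℕ) :
    (∑ j ∈ Finset.Icc 1 n, (1 / (j : ℝ))) = ∑ i ∈ Finset.range n, (1 / (i + 1) : ℝ) := by
  rw [← Finset.Ico_add_one_right_eq_Icc, Finset.sum_Ico_eq_sum_range]
  simp [add_comm]

lemma zipf_H_atTop :
    Tendsto (fun n : ℕ => ∑ j ∈ Finset.Icc 1 n, (1 / (j : ℝ))) atTop atTop := by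
  have he : (fun n : ℕ => ∑ j ∈ Finset.Icc 1 n, (1 / (j : ℝ)))
      = fun n : ℕ => ∑ i ∈ Finset.range n, (1 / (i + 1) : ℝ) := funext zipf_H_eq
  rw [he]
  exact Real.tendsto_sum_range_one_div_nat_succ_atTop

lemma zipf_H_one_le {n : ℕ} (hn1 : 1 ≤ n) :
    (1 : ℝ) ≤ ∑ j ∈ Finset.Icc 1 n, (1 / (j : ℝ)) := by
  have := Finset.single_le_sum (f := fun j : ℕ => (1 / (j : ℝ)))
    (fun i _ => by positivity) (Finset.mem_Icc.mpr ⟨le_refl 1, hn1⟩)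
  simpa using this

open Finset in
/-- The fraction of the Zipf data `1, 1/2, …, 1/n` lying strictly above the mean
(the head fraction of the first head/tail break) tends to 0 as `n → ∞`. -/
theorem zipf_head_fraction_tendsto_zero
    (h : ℕ → ℕ)
    (hh : ∀ n, h n = ((Finset.Icc 1 n).filter
      (fun i : ℕ => (1 / (i : ℝ)) > (∑ j ∈ Finset.Icc 1 n, (1 / (j : ℝ))) / n)).card) :
    Filter.Tendsto (fun n : ℕ => (h n : ℝ) / n) Filter.atTop (nhds 0) := by
  have hinv : Tendsto (fun n : ℕ => (∑ j ∈ Finset.Icc 1 n, (1 / (j : ℝ)))⁻¹)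
      atTop (nhds 0) := zipf_H_atTop.inv_tendsto_atTop
  apply tendsto_of_tendsto_of_tendsto_of_le_of_le' tendsto_const_nhds hinv
  · filter_upwards with n
    positivity
  · filter_upwards [eventually_ge_atTop 1] with n hn1
    set H : ℝ := ∑ j ∈ Finset.Icc 1 n, (1 / (j : ℝ)) with hHdef
    have hn0 : (0 : ℝ) < n := by exact_mod_cast hn1
    have hHpos : (0 : ℝ) < H := lt_of_lt_of_le one_pos (zipf_H_one_le hn1)
    have hsub : ((Finset.Icc 1 n).filter
        (fun i : ℕ => (1 / (i : ℝ)) > H / n)) ⊆ Finset.Icc 1 ⌊(n : ℝ) / H⌋₊ := by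
      intro i hi
      rw [Finset.mem_filter, Finset.mem_Icc] at hi
      obtain ⟨⟨hi1, _⟩, hgt⟩ := hi
      have hipos : (0 : ℝ) < i := by exact_mod_cast hi1
      have hlt : H * i < 1 * n := (div_lt_div_iff₀ hn0 hipos).mp hgt
      have hle : (i : ℝ) ≤ n / H := by
        rw [le_div_iff₀ hHpos]; nlinarith
      exact Finset.mem_Icc.mpr ⟨hi1, Nat.le_floor hle⟩
    have hcard : (h n : ℝ) ≤ (n : ℝ) / H := by
      have hc := Finset.card_le_card hsub
      rw [Nat.card_Icc] at hc
      have h2 : h n ≤ ⌊(n : ℝ) / H⌋₊ := by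
        rw [hh n, ← hHdef]; omega
      calc (h n : ℝ) ≤ (⌊(n : ℝ) / H⌋₊ : ℝ) := by exact_mod_cast h2
        _ ≤ (n : ℝ) / H := Nat.floor_le (by positivity)
    rw [div_le_iff₀ hn0, inv_mul_eq_div]
    exact hcard
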